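/- Let H be a Hilbert space, x, y ∈ H distinct points, V an m-dimensional linear subspace, and α ∈ (0,1). If dist(y − x, V) > (α + (1−α)/2)·|x − y| (i.e., y lies in the bad cone with the larger aperture parameter α + (1−α)/2), then there exists a constant η_α > 0 depending only on α such that the ball B(y, η_α·|x−y|) is contained in the bad cone C_B(x, V, α) = { z ∈ H : dist(z − x, V) > α|z − x| }. -/

import Mathlib

open Metric Set

/-- The bad cone at `x` with respect to the subspace `V` and aperture `α`. -/
def badCone {H : Type*} [NormedAddCommGroup H] [InnerProductSpace ℝ H]
    (x : H) (V : Submodule ℝ H) (α : ℝ) : Set H :=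
  {y | α * dist y x < Metric.infDist (y - x) (V : Set H)}

/-- If `y` lies in the bad cone at `x` with the larger aperture `α + (1-α)/2`, then a whole
ball around `y` of radius `η_α · |x - y|` lies in the bad cone of aperture `α`, where
`η_α > 0` depends only on `α`. -/
theorem statement9 {H : Type*} [NormedAddCommGroup H] [InnerProductSpace ℝ H]
    (m : ℕ) (α : ℝ) (hα : α ∈ Set.Ioo (0 : ℝ) 1) :
    ∃ η > (0 : ℝ), ∀ (x y : H) (V : Submodule ℝ H), FiniteDimensional ℝ V →
      Module.finrank ℝ V = m → x ≠ y →
      y ∈ badCone x V (α + (1 - α) / 2) →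
      Metric.closedBall y (η * dist x y) ⊆ badCone x V α := by
  obtain ⟨hα0, hα1⟩ := hα
  refine ⟨(1 - α) / (2 * (1 + α)), div_pos (by linarith) (by linarith), ?_⟩
  intro x y V _ _ hxy hy z hz
  set η : ℝ := (1 - α) / (2 * (1 + α)) with hηdef
  have hd : 0 < dist x y := dist_pos.2 hxy
  simp only [badCone, mem_setOf_eq] at hy ⊢
  have hzy : dist z y ≤ η * dist x y := mem_closedBall.1 hz
  have h1 : Metric.infDist (y - x) (V : Set H) ≤
      Metric.infDist (z - x) (V : Set H) + dist z y := by
    have := Metric.infDist_le_infDist_add_dist (x := y - x) (y := z - x)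
      (s := (V : Set H))
    have hdd : dist (y - x) (z - x) = dist z y := by
      rw [dist_sub_right, dist_comm]
    linarith [this, hdd.le, hdd.ge]
  have htri : dist z x ≤ dist z y + dist y x := dist_triangle z y x
  have hyx : dist y x = dist x y := dist_comm y x
  have hηeq : η * (1 + α) = (1 - α) / 2 := by
    rw [hηdef]; field_simp
  nlinarith [hy, hzy, h1, htri, hd, hα0.le]
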